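/- Let γ ∈ (0,1) and let λ ∈ ℂ with Re λ > 0. Then |(λ^γ − 1)/(λ^γ + 1)| ≤ |(λ − 1)/(λ + 1)|, where λ^γ denotes the principal power; moreover, equality holds if and only if λ = 1. -/

import Mathlib

open MeasureTheory Filter Set

noncomputable section

/-- Partial Laplace integral of `f : [0,∞) → ℂ` at `l` up to time `t`. -/
def lapPartial (f : ℝ → ℂ) (l : ℂ) (t : ℝ) : ℂ :=
  ∫ s in Set.Ioc (0:ℝ) t, Complex.exp (-(l * s)) * f s

/-- The Laplace transform of `f` at `l` exists and equals `F`. -/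
def HasLaplace (f : ℝ → ℂ) (l : ℂ) (F : ℂ) : Prop :=
  Filter.Tendsto (lapPartial f l) Filter.atTop (nhds F)

/-- The abscissa of convergence of the Laplace transform of `f`, as an extended real. -/
def laplaceAbs (f : ℝ → ℂ) : EReal :=
  sInf {x : EReal | ∃ ω : ℝ, x = (ω : EReal) ∧ ∀ l : ℂ, ω < l.re → ∃ F, HasLaplace f l F}

/-- `lam` is a uniqueness sequence for the one-dimensional Laplace transform. -/
def IsUniquenessSeq (lam : ℕ → ℂ) : Prop :=
  ∀ f : ℝ → ℂ, MeasureTheory.LocallyIntegrableOn f (Set.Ici 0) →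
    (∀ k, laplaceAbs f < (((lam k).re : ℝ) : EReal)) →
    (∀ k, HasLaplace f (lam k) 0) →
    ∀ᵐ t : ℝ, 0 ≤ t → f t = 0

/-- Partial `n`-dimensional Laplace integral of `f : [0,∞)^n → ℂ` at `l` over the box `[0,t]`. -/
def mLapPartial (n : ℕ) (f : (Fin n → ℝ) → ℂ) (l : Fin n → ℂ) (t : Fin n → ℝ) : ℂ :=
  ∫ s in Set.pi Set.univ (fun i => Set.Ioc (0:ℝ) (t i)),
    Complex.exp (-(∑ i, l i * (s i))) * f s

/-- The `n`-dimensional Laplace transform of `f` at `l` exists (as the iterated limit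
`t₁ → ∞, …, tₙ → ∞` of the partial integrals) and equals `F`. -/
def HasMLaplace (n : ℕ) (f : (Fin n → ℝ) → ℂ) (l : Fin n → ℂ) (F : ℂ) : Prop :=
  Filter.Tendsto (mLapPartial n f l) Filter.atTop (nhds F)

/-- `Ω(f)`: the region of convergence of the `n`-dimensional Laplace integral. -/
def mOmega (n : ℕ) (f : (Fin n → ℝ) → ℂ) : Set (Fin n → ℂ) :=
  {l | ∃ F, HasMLaplace n f l F}

/-- `Ω_b(f)`: the set of `l` for which the partial Laplace integrals are bounded. -/
def mOmegaB (n : ℕ) (f : (Fin n → ℝ) → ℂ) : Set (Fin n → ℂ) :=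
  {l | Bornology.IsBounded (mLapPartial n f l '' {t | ∀ i, 0 ≤ t i})}

/-- A countable family `lam : K → ℂⁿ` is a uniqueness sequence for the `n`-dimensional
Laplace transform. -/
def IsMUniquenessFamily (n : ℕ) {K : Type} [Countable K] (lam : K → Fin n → ℂ) : Prop :=
  ∀ f : (Fin n → ℝ) → ℂ,
    MeasureTheory.LocallyIntegrableOn f {t | ∀ i, 0 ≤ t i} →
    (∃ ω : Fin n → EReal, (∀ j, ω j ≠ ⊤) ∧
      {l : Fin n → ℂ | ∀ j, ω j < (((l j).re : ℝ) : EReal)} ⊆ mOmegaB n f ∩ mOmega n f ∧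
      ∀ k j, ω j < ((((lam k j).re : ℝ)) : EReal)) →
    (∀ k, HasMLaplace n f (lam k) 0) →
    ∀ᵐ t : Fin n → ℝ, (∀ i, 0 ≤ t i) → f t = 0

private lemma keyReal (γ r θ : ℝ) (hγ0 : 0 < γ) (hγ1 : γ < 1) (hr : 0 < r)
    (hθ : |θ| < Real.pi / 2) :
    ((r ^ γ) ^ 2 + 1) * (r * Real.cos θ) ≤ (r ^ 2 + 1) * (r ^ γ * Real.cos (γ * θ)) ∧
    (((r ^ γ) ^ 2 + 1) * (r * Real.cos θ) = (r ^ 2 + 1) * (r ^ γ * Real.cos (γ * θ)) ↔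
      r = 1 ∧ θ = 0) := by
  have hpi : Real.pi / 2 ≤ Real.pi := by linarith [Real.pi_pos]
  have habs : |γ * θ| ≤ |θ| := by
    rw [abs_mul, abs_of_pos hγ0]
    nlinarith [abs_nonneg θ]
  have hc1 : Real.cos θ ≤ Real.cos (γ * θ) := by
    have := Real.cos_le_cos_of_nonneg_of_le_pi (abs_nonneg (γ * θ)) (le_trans hθ.le hpi) habs
    rwa [Real.cos_abs, Real.cos_abs] at this
  have hcpos : 0 < Real.cos (γ * θ) := by
    apply Real.cos_pos_of_mem_Ioo
    constructor
    · nlinarith [abs_lt.mp (lt_of_le_of_lt habs hθ)]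
    · nlinarith [abs_lt.mp (lt_of_le_of_lt habs hθ)]
  have hcθpos : 0 < Real.cos θ := by
    apply Real.cos_pos_of_mem_Ioo
    constructor
    · nlinarith [abs_lt.mp hθ]
    · nlinarith [abs_lt.mp hθ]
  have hrγ : (0:ℝ) < r ^ γ := Real.rpow_pos_of_pos hr γ
  -- the product inequality
  have hprod' : r ≠ 1 → 0 < (r ^ γ - r) * (1 - r * r ^ γ) := by
    intro hne
    rcases lt_trichotomy r 1 with h | h | h
    · have h1 : r < r ^ γ := by
        have := Real.rpow_lt_rpow_of_exponent_gt hr h hγ1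
        rwa [Real.rpow_one] at this
      have h2 : r ^ γ ≤ 1 := Real.rpow_le_one hr.le h.le hγ0.le
      have h3 : r * r ^ γ ≤ r * 1 := mul_le_mul_of_nonneg_left h2 hr.le
      exact mul_pos (by linarith) (by linarith)
    · exact absurd h hne
    · have h1 : r ^ γ < r := by
        have := Real.rpow_lt_rpow_of_exponent_lt h hγ1
        rwa [Real.rpow_one] at this
      have h2 : 1 < r ^ γ := (Real.one_lt_rpow_iff_of_pos hr).mpr (Or.inl ⟨h, hγ0⟩)
      have h3 : r * 1 < r * r ^ γ := mul_lt_mul_of_pos_left h2 (by linarith)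
      exact mul_pos_of_neg_of_neg (by linarith) (by linarith)
  have hprod : 0 ≤ (r ^ γ - r) * (1 - r * r ^ γ) := by
    rcases eq_or_ne r 1 with h | h
    · simp [h]
    · exact (hprod' h).le
  have h2 : ((r ^ γ) ^ 2 + 1) * r ≤ (r ^ 2 + 1) * r ^ γ := by nlinarith [hprod]
  constructor
  · nlinarith [mul_le_mul_of_nonneg_left hc1 (by positivity : (0:ℝ) ≤ ((r ^ γ) ^ 2 + 1) * r),
      mul_le_mul_of_nonneg_right h2 hcpos.le]
  · constructor
    · intro heq
      have hr1 : r = 1 := by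
        by_contra hne
        have := mul_lt_mul_of_pos_right (by nlinarith [hprod' hne] :
          ((r ^ γ) ^ 2 + 1) * r < (r ^ 2 + 1) * r ^ γ) hcpos
        nlinarith [mul_le_mul_of_nonneg_left hc1 (by positivity : (0:ℝ) ≤ ((r ^ γ) ^ 2 + 1) * r)]
      subst hr1
      rw [Real.one_rpow] at heq
      have hcc : Real.cos θ = Real.cos (γ * θ) := by nlinarith [heq]
      refine ⟨rfl, ?_⟩
      by_contra hθ0
      have habs' : |γ * θ| < |θ| := by
        rw [abs_mul, abs_of_pos hγ0]
        have : 0 < |θ| := abs_pos.mpr hθ0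
        nlinarith
      have := Real.cos_lt_cos_of_nonneg_of_le_pi (abs_nonneg (γ * θ)) (le_trans hθ.le hpi) habs'
      rw [Real.cos_abs, Real.cos_abs] at this
      linarith
    · rintro ⟨hr1, hθ0⟩
      subst hr1; subst hθ0
      simp

private lemma ratio_sq (z : ℂ) (hz : 0 < z.re) :
    ‖(z - 1) / (z + 1)‖ ^ 2 =
      (Complex.normSq z - 2 * z.re + 1) / (Complex.normSq z + 2 * z.re + 1) := by
  rw [norm_div, div_pow, Complex.sq_norm, Complex.sq_norm]
  congr 1 <;>
  · simp [Complex.normSq_apply, Complex.sub_re, Complex.sub_im, Complex.add_re, Complex.add_im]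
    ring

set_option maxHeartbeats 1000000 in
theorem stmt17 (γ : ℝ) (hγ : γ ∈ Set.Ioo (0:ℝ) 1) (l : ℂ) (hl : 0 < l.re) :
    ‖(l ^ ((γ : ℝ) : ℂ) - 1) / (l ^ ((γ : ℝ) : ℂ) + 1)‖ ≤
      ‖(l - 1) / (l + 1)‖ ∧
    (‖(l ^ ((γ : ℝ) : ℂ) - 1) / (l ^ ((γ : ℝ) : ℂ) + 1)‖ =
      ‖(l - 1) / (l + 1)‖ ↔ l = 1) := by
  obtain ⟨hγ0, hγ1⟩ := hγ
  have hl0 : l ≠ 0 := by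
    intro h; rw [h] at hl; simp at hl
  set r := ‖l‖ with hrdef
  set θ := Complex.arg l with hθdef
  have hr : 0 < r := norm_pos_iff.mpr hl0
  have hθ : |θ| < Real.pi / 2 := Complex.abs_arg_lt_pi_div_two_iff.mpr (Or.inl hl)
  set w := l ^ ((γ : ℝ) : ℂ) with hwdef
  have hwexp : w = Complex.exp (Complex.log l * (γ : ℂ)) := Complex.cpow_def_of_ne_zero hl0 _
  have hlog_re : (Complex.log l * (γ : ℂ)).re = Real.log r * γ := by
    simp [Complex.mul_re, Complex.log_re, Complex.log_im]
    exact Or.inl rfl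
  have hlog_im : (Complex.log l * (γ : ℂ)).im = θ * γ := by
    simp [Complex.mul_im, Complex.log_re, Complex.log_im]
    exact Or.inl rfl
  have hrg : Real.exp (Real.log r * γ) = r ^ γ := (Real.rpow_def_of_pos hr γ).symm
  have hwre : w.re = r ^ γ * Real.cos (γ * θ) := by
    rw [hwexp, Complex.exp_re, hlog_re, hlog_im, hrg, mul_comm θ γ]
  have hwabs : Complex.normSq w = (r ^ γ) ^ 2 := by
    rw [← Complex.sq_norm, hwexp, Complex.norm_exp, hlog_re, hrg]
  have hlre : l.re = r * Real.cos θ := by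
    have := Complex.cos_arg hl0
    rw [← hθdef, ← hrdef] at this
    field_simp at this
    linarith
  have hlns : Complex.normSq l = r ^ 2 := (Complex.sq_norm l).symm
  have key := keyReal γ r θ hγ0 hγ1 hr hθ
  have hcpos : 0 < Real.cos (γ * θ) := by
    have habs : |γ * θ| ≤ |θ| := by
      rw [abs_mul, abs_of_pos hγ0]; nlinarith [abs_nonneg θ]
    apply Real.cos_pos_of_mem_Ioo
    constructor
    · nlinarith [abs_lt.mp (lt_of_le_of_lt habs hθ)]
    · nlinarith [abs_lt.mp (lt_of_le_of_lt habs hθ)]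
  have hrγ : (0:ℝ) < r ^ γ := Real.rpow_pos_of_pos hr γ
  have hwre_pos : 0 < w.re := by rw [hwre]; positivity
  have hDw : 0 < Complex.normSq w + 2 * w.re + 1 := by
    nlinarith [Complex.normSq_nonneg w]
  have hDl : 0 < Complex.normSq l + 2 * l.re + 1 := by
    nlinarith [Complex.normSq_nonneg l]
  have hNw : 0 ≤ Complex.normSq w - 2 * w.re + 1 := by
    have : Complex.normSq w - 2 * w.re + 1 = Complex.normSq (w - 1) := by
      simp [Complex.normSq_apply, Complex.sub_re, Complex.sub_im]; ring
    rw [this]; exact Complex.normSq_nonneg _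
  have hsq : ‖(w - 1) / (w + 1)‖ ^ 2 ≤ ‖(l - 1) / (l + 1)‖ ^ 2 := by
    rw [ratio_sq w hwre_pos, ratio_sq l hl]
    rw [div_le_div_iff₀ hDw hDl]
    rw [hwre, hwabs, hlre, hlns]
    nlinarith [key.1]
  have hle : ‖(w - 1) / (w + 1)‖ ≤ ‖(l - 1) / (l + 1)‖ := by
    have h1 := norm_nonneg ((w - 1) / (w + 1))
    have h2 := norm_nonneg ((l - 1) / (l + 1))
    nlinarith [hsq]
  refine ⟨hle, ?_, ?_⟩
  · intro heq
    have hsqeq : ‖(w - 1) / (w + 1)‖ ^ 2 = ‖(l - 1) / (l + 1)‖ ^ 2 := by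
      rw [heq]
    rw [ratio_sq w hwre_pos, ratio_sq l hl] at hsqeq
    rw [div_eq_div_iff (ne_of_gt hDw) (ne_of_gt hDl)] at hsqeq
    rw [hwre, hwabs, hlre, hlns] at hsqeq
    have hkey : ((r ^ γ) ^ 2 + 1) * (r * Real.cos θ) = (r ^ 2 + 1) * (r ^ γ * Real.cos (γ * θ)) := by
      nlinarith [hsqeq]
    obtain ⟨hr1, hθ0⟩ := key.2.mp hkey
    have := Complex.norm_mul_exp_arg_mul_I l
    rw [← hrdef, ← hθdef, hr1, hθ0] at this
    simpa using this.symm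
  · intro h1
    rw [hwdef, h1]
    simp

end
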